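/- arXiv:0911.2802 — 2 statements merged into one kernel-verified Lean document; each statement's English description precedes it below -/
import Mathlib

section
/- Let n ≥ 1 and let w : Fin (2n) → Fin 2 be a balanced binary word. Then there exists r with 0 ≤ r < 2n such that the rotation of w by r is a Dyck word. (Cycle lemma: every (1,1)-balanced cyclic word admits a Dyck representative.) -/
/-- The rotation of a word `w : Fin L → A` by `r` positions. -/
def rotate {L : ℕ} {A : Type*} (r : ℕ) (w : Fin L → A) : Fin L → A :=
  fun i => w ⟨((i : ℕ) + r) % L, Nat.mod_lt _ (Nat.lt_of_le_of_lt (Nat.zero_le _) i.isLt)⟩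

/-- The `j`-th prefix sum of a binary word, where letter `0` counts `+1`
and letter `1` counts `-1`. -/
def prefixSum {L : ℕ} (w : Fin L → Fin 2) (j : ℕ) : ℤ :=
  ∑ i ∈ Finset.range j, if h : i < L then (if w ⟨i, h⟩ = 0 then 1 else -1) else 0

lemma prefixSum_succ {L : ℕ} (w : Fin L → Fin 2) (j : ℕ) :
    prefixSum w (j + 1) =
      prefixSum w j + (if h : j < L then (if w ⟨j, h⟩ = 0 then 1 else -1) else 0) :=
  Finset.sum_range_succ _ _

lemma rotate_prefixSum (n : ℕ) (hn : 1 ≤ n) (w : Fin (2 * n) → Fin 2)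
    (hbal : prefixSum w (2 * n) = 0) (r : ℕ) (hr : r < 2 * n) :
    ∀ j ≤ 2 * n, prefixSum (rotate r w) j =
      (if r + j ≤ 2 * n then prefixSum w (r + j) else prefixSum w (r + j - 2 * n))
        - prefixSum w r := by
  intro j hj
  induction j with
  | zero =>
    simp [prefixSum, Nat.le_of_lt hr]
  | succ j ih =>
    have hj' : j ≤ 2 * n := Nat.le_of_succ_le hj
    have hjlt : j < 2 * n := hj
    have ih' := ih hj'
    rw [prefixSum_succ, ih']
    rw [dif_pos hjlt, show r + (j + 1) = r + j + 1 by omega]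
    have hrot : rotate r w ⟨j, hjlt⟩ = w ⟨(j + r) % (2 * n), Nat.mod_lt _ (Nat.lt_of_le_of_lt (Nat.zero_le _) hjlt)⟩ := rfl
    by_cases h1 : r + j + 1 ≤ 2 * n
    · -- r + j < 2n
      have h2 : r + j < 2 * n := h1
      have hmod : (j + r) % (2 * n) = j + r := Nat.mod_eq_of_lt (by omega)
      rw [if_pos (Nat.le_of_lt h2), if_pos h1]
      have hstep := prefixSum_succ w (r + j)
      rw [dif_pos h2] at hstep
      rw [hstep]
      have : (⟨(j + r) % (2 * n), Nat.mod_lt _ (Nat.lt_of_le_of_lt (Nat.zero_le _) hjlt)⟩ : Fin (2 * n)) = ⟨r + j, h2⟩ := by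
        simp [hmod]; omega
      rw [hrot, this]
      ring
    · by_cases h2 : r + j ≤ 2 * n
      · -- r + j = 2n, crossing step
        have heq : r + j = 2 * n := by omega
        have hmod : (j + r) % (2 * n) = 0 := by rw [show j + r = 2 * n by omega]; exact Nat.mod_self _
        rw [if_pos h2, if_neg h1, heq, hbal]
        have h0 : 0 < 2 * n := by omega
        have hstep := prefixSum_succ w 0
        rw [dif_pos h0] at hstep
        rw [show 2 * n + 1 - 2 * n = 1 by omega]
        have hps0 : prefixSum w 0 = 0 := by simp [prefixSum]
        rw [hstep, hps0]
        have : (⟨(j + r) % (2 * n), Nat.mod_lt _ (Nat.lt_of_le_of_lt (Nat.zero_le _) hjlt)⟩ : Fin (2 * n)) = ⟨0, h0⟩ := by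
          simp [hmod]
        rw [hrot, this]
        ring
      · -- r + j > 2n
        have hlt : r + j - 2 * n < 2 * n := by omega
        have hmod : (j + r) % (2 * n) = j + r - 2 * n := by
          rw [Nat.mod_eq_sub_mod (by omega)]
          exact Nat.mod_eq_of_lt (by omega)
        rw [if_neg h2, if_neg (by omega : ¬ r + j + 1 ≤ 2 * n)]
        have hstep := prefixSum_succ w (r + j - 2 * n)
        rw [dif_pos hlt] at hstep
        have hidx : r + j + 1 - 2 * n = (r + j - 2 * n) + 1 := by omega
        rw [hidx, hstep]
        have : (⟨(j + r) % (2 * n), Nat.mod_lt _ (Nat.lt_of_le_of_lt (Nat.zero_le _) hjlt)⟩ : Fin (2 * n)) = ⟨r + j - 2 * n, hlt⟩ := by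
          simp [hmod]; omega
        rw [hrot, this]
        ring

/-- Cycle lemma: every balanced binary word of length `2n` admits a rotation that is a
Dyck word (all prefix sums nonnegative). -/
theorem exists_rotation_isDyck
    (n : ℕ) (hn : 1 ≤ n) (w : Fin (2 * n) → Fin 2)
    (hbal : prefixSum w (2 * n) = 0) :
    ∃ r : ℕ, r < 2 * n ∧ ∀ j ≤ 2 * n, 0 ≤ prefixSum (rotate r w) j := by
  have hne : (Finset.range (2 * n)).Nonempty := ⟨0, by simp; omega⟩
  obtain ⟨r, hrmem, hrmin⟩ := Finset.exists_min_image (Finset.range (2 * n)) (prefixSum w) hne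
  have hr : r < 2 * n := Finset.mem_range.mp hrmem
  have hmin : ∀ k < 2 * n, prefixSum w r ≤ prefixSum w k := fun k hk =>
    hrmin k (Finset.mem_range.mpr hk)
  have hmin' : ∀ k ≤ 2 * n, prefixSum w r ≤ prefixSum w k := by
    intro k hk
    rcases Nat.lt_or_ge k (2 * n) with h | h
    · exact hmin k h
    · have : k = 2 * n := by omega
      rw [this, hbal]
      have := hmin 0 (by omega)
      simpa [prefixSum] using this
  refine ⟨r, hr, fun j hj => ?_⟩
  rw [rotate_prefixSum n hn w hbal r hr j hj]
  by_cases h : r + j ≤ 2 * n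
  · rw [if_pos h]
    linarith [hmin' (r + j) h]
  · rw [if_neg h]
    linarith [hmin' (r + j - 2 * n) (by omega)]
end

section
/- Let k ≥ 1 and let v : Fin k → ℕ satisfy v i ≥ 1 for all i and gcd(v 1, …, v k) = 1; set V = Σ_i v i. For m ≥ 1 put L = V·m and let N_{v,m} denote the number of rotation-equivalence classes of words w : Fin L → Fin k having exactly v i · m occurrences of each letter i (v-balanced necklaces of length L). Then L · N_{v,m} = Σ_{d ∣ m} φ(d) · ( (L/d)! / ∏_i (v i · m / d)! ). -/
/-- Rotation-equivalence of words: `w'` is a rotation of `w`. -/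
def rotEquiv {L : ℕ} {A : Type*} (w w' : Fin L → A) : Prop :=
  ∃ r : ℕ, w' = rotate r w

open Finset

section Helpers

variable {L : ℕ} {A : Type*}

lemma card_filter_eq_count_ofFn {n : ℕ} {α : Type*} [DecidableEq α] (w : Fin n → α) (a : α) :
    (Finset.univ.filter (fun j => w j = a)).card = (List.ofFn w).count a := by
  classical
  rw [List.ofFn_eq_map, ← Multiset.coe_count, ← Multiset.map_coe, Multiset.count_map]
  rw [Finset.card_filter]
  simp only [Finset.sum_boole]
  rw [Fin.univ_def]
  simp [Multiset.filter_coe, ← Multiset.countP_eq_card_filter, eq_comm]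
  congr 1

lemma card_filter_comp_equiv {n : ℕ} {α : Type*} [DecidableEq α] (w : Fin n → α)
    (σ : Fin n ≃ Fin n) (a : α) :
    (Finset.univ.filter (fun j => w (σ j) = a)).card
      = (Finset.univ.filter (fun j => w j = a)).card := by
  rw [← Fintype.card_subtype, ← Fintype.card_subtype]
  exact Fintype.card_congr (σ.subtypeEquiv (fun j => Iff.rfl))

lemma exists_base_word (k : ℕ) (c : Fin k → ℕ) :
    ∃ w : Fin (∑ i, c i) → Fin k, ∀ i, (Finset.univ.filter (fun j => w j = i)).card = c i := by
  classical
  set l : List (Fin k) := (List.ofFn (fun i => List.replicate (c i) i)).flatten with hl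
  have hlen : l.length = ∑ i, c i := by
    simp [hl, List.length_flatten, List.sum_ofFn]
  refine ⟨fun j => l.get (Fin.cast hlen.symm j), fun i => ?_⟩
  have hofn : List.ofFn (fun j : Fin (∑ i, c i) => l.get (Fin.cast hlen.symm j)) = l := by
    apply List.ext_getElem
    · simp [hlen]
    · intro j h1 h2
      simp
  rw [card_filter_eq_count_ofFn, hofn, hl, List.count_flatten]
  simp only [List.map_ofFn]
  rw [List.sum_ofFn]
  have : ∀ i' : Fin k, (List.replicate (c i') i').count i = if i' = i then c i else 0 := by
    intro i'
    rcases eq_or_ne i' i with h | h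
    · subst h; simp
    · simp [List.count_replicate, h, Ne.symm h]
  simp only [Function.comp]
  rw [Finset.sum_congr rfl (fun i' _ => this i')]
  simp

def permFiberEquiv {d : ℕ} {α : Type*} (w w' : Fin d → α) :
    {σ : Equiv.Perm (Fin d) // w' ∘ σ = w} ≃ ∀ a : α, ({j // w j = a} ≃ {j // w' j = a}) where
  toFun := fun σp a => σp.1.subtypeEquiv (fun j => by
      have h := congrFun σp.2 j
      simp only [Function.comp_apply] at h
      rw [← h])
  invFun := fun e => ⟨Equiv.ofFiberEquiv e, funext fun j => Equiv.ofFiberEquiv_map e j⟩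
  left_inv := fun σp => by
    apply Subtype.ext
    apply Equiv.ext
    intro j
    simp [Equiv.ofFiberEquiv, Equiv.sigmaFiberEquiv]
  right_inv := fun e => by
    funext a
    apply Equiv.ext
    rintro ⟨j, hj⟩
    subst hj
    rfl

lemma card_words_mul {k : ℕ} (c : Fin k → ℕ) :
    Fintype.card {w : Fin (∑ i, c i) → Fin k //
        ∀ i, (Finset.univ.filter (fun j => w j = i)).card = c i} * ∏ i, (c i).factorial
      = (∑ i, c i).factorial := by
  classical
  obtain ⟨w0, hw0⟩ := exists_base_word k c
  set S := {w : Fin (∑ i, c i) → Fin k //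
    ∀ i, (Finset.univ.filter (fun j => w j = i)).card = c i}
  set Φ : Equiv.Perm (Fin (∑ i, c i)) → S := fun σ =>
    ⟨fun j => w0 (σ j), fun i => by rw [card_filter_comp_equiv w0 σ i]; exact hw0 i⟩ with hΦ
  have key : ∀ w : S, Fintype.card {σ // Φ σ = w} = ∏ i, (c i).factorial := by
    intro w
    have e1 : {σ // Φ σ = w}
        ≃ {σ : Equiv.Perm (Fin (∑ i, c i)) // (fun j => w0 (σ j)) = w.1} :=
      Equiv.subtypeEquiv (Equiv.refl _) (fun σ => by
        simp only [Equiv.refl_apply]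
        constructor
        · intro h; rw [← h]
        · intro h; exact Subtype.ext h)
    have e2 : {σ : Equiv.Perm (Fin (∑ i, c i)) // (fun j => w0 (σ j)) = w.1}
        ≃ ∀ a : Fin k, ({j // w.1 j = a} ≃ {j // w0 j = a}) := permFiberEquiv w.1 w0
    rw [Fintype.card_congr (e1.trans e2), Fintype.card_pi]
    refine Finset.prod_congr rfl (fun i _ => ?_)
    have hcw : Fintype.card {j // w.1 j = i} = c i := by
      rw [Fintype.card_subtype]; exact w.2 i
    have hcw0 : Fintype.card {j // w0 j = i} = c i := by
      rw [Fintype.card_subtype]; exact hw0 i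
    rw [Fintype.card_equiv (Fintype.equivOfCardEq (hcw.trans hcw0.symm)), hcw]
  calc Fintype.card S * ∏ i, (c i).factorial
      = ∑ _w : S, ∏ i, (c i).factorial := by
        rw [Finset.sum_const, Finset.card_univ, smul_eq_mul]
    _ = ∑ w : S, Fintype.card {σ // Φ σ = w} :=
        (Finset.sum_congr rfl (fun w _ => (key w).symm))
    _ = Fintype.card (Σ w : S, {σ // Φ σ = w}) := by rw [Fintype.card_sigma]
    _ = Fintype.card (Equiv.Perm (Fin (∑ i, c i))) :=
        Fintype.card_congr (Equiv.sigmaFiberEquiv Φ)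
    _ = (∑ i, c i).factorial := by rw [Fintype.card_perm, Fintype.card_fin]

lemma card_words_mul' {k d : ℕ} (c : Fin k → ℕ) (h : ∑ i, c i = d) :
    Fintype.card {w : Fin d → Fin k //
        ∀ i, (Finset.univ.filter (fun j => w j = i)).card = c i} * ∏ i, (c i).factorial
      = d.factorial := by
  subst h; exact card_words_mul c

lemma rotate_rotate (r s : ℕ) (w : Fin L → A) : rotate r (rotate s w) = rotate (r + s) w := by
  funext i
  simp only [rotate]
  congr 1
  apply Fin.ext
  simp only [Nat.mod_add_mod]
  rw [Nat.add_assoc, Nat.add_comm r s]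

lemma rotate_zero (w : Fin L → A) : rotate 0 w = w := by
  funext i
  simp only [rotate, Nat.add_zero]
  congr 1
  exact Fin.ext (Nat.mod_eq_of_lt i.isLt)

lemma rotate_mod (r : ℕ) (w : Fin L → A) : rotate (r % L) w = rotate r w := by
  funext i
  simp only [rotate]
  congr 1
  exact Fin.ext (Nat.add_mod_mod _ _ _)

lemma rotate_mul (c t : ℕ) (w : Fin L → A) (hw : rotate c w = w) : rotate (c * t) w = w := by
  induction t with
  | zero => simpa using rotate_zero w
  | succ t ih =>
    rw [Nat.mul_succ, ← rotate_rotate, hw, ih]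

lemma rotate_symm (hL : 0 < L) (r : ℕ) (w : Fin L → A) :
    rotate (L - r % L) (rotate r w) = w := by
  rw [rotate_rotate, ← rotate_mod]
  have h1 : r % L < L := Nat.mod_lt _ hL
  have h2 : (L - r % L + r) % L = 0 := by
    rw [← Nat.add_mod_mod]
    have : L - r % L + r % L = L := by omega
    rw [this, Nat.mod_self]
  rw [h2, rotate_zero]

lemma rotate_count [DecidableEq A] (hL : 0 < L) (r : ℕ) (w : Fin L → A) (a : A) :
    (univ.filter (fun j => rotate r w j = a)).card = (univ.filter (fun j => w j = a)).card := by
  haveI : NeZero L := ⟨hL.ne'⟩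
  have : rotate r w = fun j => w (Equiv.addRight (⟨r % L, Nat.mod_lt _ hL⟩ : Fin L) j) := by
    funext j
    simp only [rotate, Equiv.coe_addRight]
    congr 1
    apply Fin.ext
    rw [Fin.add_def]
    exact (Nat.add_mod_mod _ _ _).symm
  rw [this]
  exact card_filter_comp_equiv w (Equiv.addRight _) a

lemma periodic_key {c : ℕ} (hc : 0 < c) {w : Fin L → A} (hw : rotate c w = w)
    (t : ℕ) (ht : t < L) : w ⟨t, ht⟩ = w ⟨t % c, Nat.lt_of_le_of_lt (Nat.mod_le _ _) ht⟩ := by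
  induction t using Nat.strong_induction_on with
  | _ t ih =>
    rcases Nat.lt_or_ge t c with h | h
    · congr 1
      exact (Fin.ext (Nat.mod_eq_of_lt h)).symm
    · have ht' : t - c < L := Nat.lt_of_le_of_lt (Nat.sub_le _ _) ht
      have h1 : w ⟨t - c, ht'⟩ = w ⟨t, ht⟩ := by
        have := congrFun hw ⟨t - c, ht'⟩
        simp only [rotate] at this
        rw [← this]
        congr 1
        apply Fin.ext
        simp only []
        rw [Nat.sub_add_cancel h, Nat.mod_eq_of_lt ht]
      have h2 := ih (t - c) (by omega) ht'
      rw [← h1, h2]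
      congr 1
      apply Fin.ext
      simp only []
      conv_rhs => rw [← Nat.sub_add_cancel h, Nat.add_mod_right]

def periodicEquiv {c n : ℕ} (hc : 0 < c) (hn : 0 < n) (hL : L = n * c) :
    {w : Fin L → A // rotate c w = w} ≃ (Fin c → A) where
  toFun wp := fun t => wp.1 ⟨t.val, by
    subst hL
    calc (t : ℕ) < c := t.isLt
    _ ≤ n * c := Nat.le_mul_of_pos_left c hn⟩
  invFun f := ⟨fun j => f ⟨j.val % c, Nat.mod_lt _ hc⟩, by
    funext i
    simp only [rotate]
    congr 1
    apply Fin.ext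
    simp only []
    rw [Nat.mod_mod_of_dvd _ ⟨n, by rw [hL, Nat.mul_comm]⟩, Nat.add_mod_right]⟩
  left_inv := fun ⟨w, hw⟩ => by
    apply Subtype.ext
    funext j
    simp only []
    exact (periodic_key hc hw j.val j.isLt).symm
  right_inv := fun f => by
    funext t
    simp only []
    congr 1
    exact Fin.ext (Nat.mod_eq_of_lt t.isLt)

lemma periodic_count [DecidableEq A] {c n : ℕ} (hc : 0 < c) (hn : 0 < n) (hL : L = n * c)
    {w : Fin L → A} (hw : rotate c w = w) (a : A) :
    (univ.filter (fun j => w j = a)).card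
      = n * (univ.filter (fun t : Fin c => periodicEquiv hc hn hL ⟨w, hw⟩ t = a)).card := by
  subst hL
  rw [Finset.card_filter, Finset.card_filter]
  rw [← Fintype.sum_equiv (finProdFinEquiv : Fin n × Fin c ≃ Fin (n * c))
      (fun p => if w (finProdFinEquiv p) = a then 1 else 0)
      (fun j => if w j = a then 1 else 0) (fun p => rfl)]
  rw [Fintype.sum_prod_type]
  have hinner : ∀ x : Fin n, ∀ y : Fin c,
      w (finProdFinEquiv (x, y)) = periodicEquiv hc hn rfl ⟨w, hw⟩ y := by
    intro x y
    have hval : ((finProdFinEquiv (x, y) : Fin (n * c)) : ℕ) = y.val + c * x.val := rfl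
    have hlt : y.val + c * x.val < n * c := by
      rw [← hval]; exact (finProdFinEquiv (x, y)).isLt
    have hkey := periodic_key hc hw (y.val + c * x.val) hlt
    have hmod : (y.val + c * x.val) % c = y.val := by
      rw [Nat.add_mul_mod_self_left, Nat.mod_eq_of_lt y.isLt]
    simp only [periodicEquiv, Equiv.coe_fn_mk]
    rw [show (finProdFinEquiv (x, y) : Fin (n * c)) = ⟨y.val + c * x.val, hlt⟩ from Fin.ext hval,
      hkey]
    congr 1
    exact Fin.ext hmod
  calc (∑ x : Fin n, ∑ y : Fin c, if w (finProdFinEquiv (x, y)) = a then 1 else 0)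
      = ∑ _x : Fin n, ∑ y : Fin c,
          if periodicEquiv hc hn rfl ⟨w, hw⟩ y = a then 1 else 0 := by
        refine Finset.sum_congr rfl (fun x _ => Finset.sum_congr rfl (fun y _ => ?_))
        rw [hinner x y]
    _ = n * ∑ y : Fin c, if periodicEquiv hc hn rfl ⟨w, hw⟩ y = a then 1 else 0 := by
        rw [Finset.sum_const, Finset.card_univ, Fintype.card_fin, smul_eq_mul]

end Helpers

/-- Counting `v`-balanced necklaces: with `V = Σ i, v i`, `gcd v = 1` and `L = V·m`,
if `N` is the number of rotation-equivalence classes of words of length `L` over `Fin k`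
with exactly `v i · m` occurrences of each letter `i`, then
`L · N = Σ_{d ∣ m} φ(d) · (L/d)! / ∏ i, (v i · m / d)!`. -/
theorem count_v_balanced_necklaces
    (k : ℕ) (hk : 1 ≤ k) (v : Fin k → ℕ) (hv : ∀ i, 1 ≤ v i)
    (hgcd : Finset.univ.gcd v = 1)
    (m : ℕ) (hm : 1 ≤ m) :
    (∑ i, v i) * m *
      Nat.card (Quot (fun w w' : {w : Fin ((∑ i, v i) * m) → Fin k //
          ∀ i : Fin k, (Finset.univ.filter (fun j => w j = i)).card = v i * m} =>
        rotEquiv w.1 w'.1))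
      = ∑ d ∈ m.divisors,
          Nat.totient d *
            (Nat.factorial ((∑ i, v i) * m / d) / ∏ i, Nat.factorial (v i * m / d)) := by
  classical
  have hV : 0 < ∑ i, v i := by
    calc 0 < v ⟨0, hk⟩ := hv _
    _ ≤ ∑ i, v i := Finset.single_le_sum (fun i _ => Nat.zero_le _) (mem_univ _)
  have hL0 : 0 < (∑ i, v i) * m := Nat.mul_pos hV hm
  set L := (∑ i, v i) * m with hLdef
  haveI : NeZero L := ⟨hL0.ne'⟩
  set S := {w : Fin L → Fin k //
    ∀ i : Fin k, (Finset.univ.filter (fun j => w j = i)).card = v i * m} with hS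
  letI act : AddAction (ZMod L) S :=
  { vadd := fun g w => ⟨rotate g.val w.1, fun i => by
      rw [rotate_count hL0]; exact w.2 i⟩
    zero_vadd := fun w => Subtype.ext (by
      show rotate (0 : ZMod L).val w.1 = w.1
      rw [ZMod.val_zero, rotate_zero])
    add_vadd := fun g h w => Subtype.ext (by
      show rotate ((g + h) : ZMod L).val w.1 = rotate g.val (rotate h.val w.1)
      rw [rotate_rotate, ZMod.val_add, rotate_mod]) }
  have hvadd : ∀ (g : ZMod L) (w : S), (g +ᵥ w : S).1 = rotate g.val w.1 := fun g w => rfl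
  -- identify the quotient
  have hquot : Nat.card (Quot (fun w w' : S => rotEquiv w.1 w'.1))
      = Fintype.card (Quotient (AddAction.orbitRel (ZMod L) S)) := by
    rw [← Nat.card_eq_fintype_card]
    apply Nat.card_congr
    apply Quot.congr (Equiv.refl S)
    intro a b
    simp only [Equiv.refl_apply]
    rw [AddAction.orbitRel_apply]
    show rotEquiv a.1 b.1 ↔ a ∈ AddAction.orbit (ZMod L) b
    constructor
    · rintro ⟨r, hr⟩
      refine ⟨((L - r % L : ℕ) : ZMod L), Subtype.ext ?_⟩
      rw [hvadd, ZMod.val_natCast, rotate_mod, hr, rotate_symm hL0]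
    · rintro ⟨g, hg⟩
      refine ⟨L - g.val % L, ?_⟩
      rw [← hg, hvadd, rotate_symm hL0]
  -- Burnside
  haveI : ∀ a : ZMod L, Fintype (AddAction.fixedBy S a) := fun a => Fintype.ofFinite _
  have burnside := AddAction.sum_card_fixedBy_eq_card_orbits_mul_card_addGroup (ZMod L) S
  rw [ZMod.card L] at burnside
  -- fixed point counts
  have hFix : ∀ g : ZMod L, Fintype.card (AddAction.fixedBy S g)
      = if addOrderOf g ∣ m then
          Nat.factorial (L / addOrderOf g) / ∏ i, Nat.factorial (v i * m / addOrderOf g)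
        else 0 := by
    intro g
    set c : ℕ := Nat.gcd L g.val with hc
    have hc0 : 0 < c := Nat.gcd_pos_of_pos_left _ hL0
    have hcL : c ∣ L := Nat.gcd_dvd_left _ _
    set n : ℕ := L / c with hn
    have hn0 : 0 < n := Nat.div_pos (Nat.le_of_dvd hL0 hcL) hc0
    have hnc : L = n * c := (Nat.div_mul_cancel hcL).symm
    have hLn : L / n = c := by rw [hnc, Nat.mul_div_cancel_left _ hn0]
    have horder : addOrderOf g = n := by
      conv_lhs => rw [← ZMod.natCast_rightInverse g]
      rw [ZMod.addOrderOf_coe _ hL0.ne']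
    -- the fixed points of g are exactly the c-periodic balanced words
    have hfix_iff : ∀ w : S, (g +ᵥ w = w) ↔ rotate c w.1 = w.1 := by
      intro w
      constructor
      · intro h
        have hrot : rotate g.val w.1 = w.1 := by
          have h2 := congrArg Subtype.val h
          rwa [hvadd] at h2
        set P : AddSubgroup (ZMod L) :=
        { carrier := {z : ZMod L | rotate z.val w.1 = w.1}
          zero_mem' := by
            simp only [Set.mem_setOf_eq, ZMod.val_zero]
            exact rotate_zero w.1
          add_mem' := by
            intro a b ha hb
            simp only [Set.mem_setOf_eq] at ha hb ⊢
            rw [ZMod.val_add, rotate_mod, ← rotate_rotate, hb, ha]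
          neg_mem' := by
            intro a ha
            simp only [Set.mem_setOf_eq] at ha ⊢
            calc rotate (-a).val w.1 = rotate (-a).val (rotate a.val w.1) := by rw [ha]
              _ = rotate ((-a).val + a.val) w.1 := rotate_rotate _ _ _
              _ = rotate (((-a).val + a.val) % L) w.1 := (rotate_mod _ _).symm
              _ = rotate ((-a + a : ZMod L).val) w.1 := by rw [ZMod.val_add]
              _ = w.1 := by rw [neg_add_cancel, ZMod.val_zero, rotate_zero] } with hP
        have hgP : g ∈ P := hrot
        have hcP : ((c : ℕ) : ZMod L) ∈ P := by
          have h2 : ((c : ℕ) : ZMod L) = (L.gcdB g.val) • g := by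
            have hbez := Nat.gcd_eq_gcd_ab L g.val
            have h3 : (((c : ℕ) : ℤ) : ZMod L)
                = ((L * L.gcdA g.val + (g.val : ℤ) * L.gcdB g.val : ℤ) : ZMod L) := by
              rw [← hbez]
            push_cast at h3
            rw [ZMod.natCast_self, ZMod.natCast_rightInverse g] at h3
            rw [zsmul_eq_mul]
            rw [h3]
            ring
          rw [h2]
          exact P.zsmul_mem hgP _
        have h4 : rotate ((c : ZMod L).val) w.1 = w.1 := hcP
        rwa [ZMod.val_natCast, rotate_mod] at h4
      · intro h
        apply Subtype.ext
        rw [hvadd]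
        obtain ⟨t, ht⟩ := Nat.gcd_dvd_right L g.val
        rw [ht]
        exact rotate_mul c t w.1 h
    have e0 : (AddAction.fixedBy S g) ≃ {w : S // rotate c w.1 = w.1} :=
      Equiv.subtypeEquivRight (fun w => by rw [AddAction.mem_fixedBy]; exact hfix_iff w)
    have e1 : {w : S // rotate c w.1 = w.1} ≃
        {p : {w : Fin L → Fin k // rotate c w = w} //
          ∀ i, (univ.filter (fun j => p.1 j = i)).card = v i * m} :=
      { toFun := fun a => ⟨⟨a.1.1, a.2⟩, a.1.2⟩
        invFun := fun p => ⟨⟨p.1.1, p.2⟩, p.1.2⟩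
        left_inv := fun a => rfl
        right_inv := fun p => rfl }
    have e2 : {p : {w : Fin L → Fin k // rotate c w = w} //
          ∀ i, (univ.filter (fun j => p.1 j = i)).card = v i * m}
        ≃ {f : Fin c → Fin k //
            ∀ i, n * (univ.filter (fun t => f t = i)).card = v i * m} :=
      (periodicEquiv hc0 hn0 hnc).subtypeEquiv (fun p =>
        forall_congr' (fun i => by rw [periodic_count hc0 hn0 hnc p.2 i]))
    rw [Fintype.card_congr (e0.trans (e1.trans e2)), horder]
    by_cases hnm : n ∣ m
    · rw [if_pos hnm]
      have hdvd_im : ∀ i, n ∣ v i * m := fun i => hnm.mul_left (v i)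
      have e3 : {f : Fin c → Fin k //
            ∀ i, n * (univ.filter (fun t => f t = i)).card = v i * m}
          ≃ {f : Fin c → Fin k //
            ∀ i, (univ.filter (fun t => f t = i)).card = v i * m / n} :=
        Equiv.subtypeEquivRight (fun f => forall_congr' (fun i => by
          constructor
          · intro h
            exact (Nat.div_eq_of_eq_mul_left hn0 (by rw [← h, Nat.mul_comm])).symm
          · intro h
            rw [h]
            exact Nat.mul_div_cancel' (hdvd_im i)))
      have hsumc : ∑ i, v i * m / n = c := by
        have h5 : n * ∑ i, v i * m / n = n * c := by
          rw [Finset.mul_sum, Finset.sum_congr rfl (fun i _ => Nat.mul_div_cancel' (hdvd_im i)),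
            ← Finset.sum_mul, ← hLdef, hnc]
        exact Nat.eq_of_mul_eq_mul_left hn0 h5
      have hkey := card_words_mul' (fun i => v i * m / n) hsumc
      rw [Fintype.card_congr e3, hLn]
      have hprodpos : 0 < ∏ i, Nat.factorial (v i * m / n) :=
        Finset.prod_pos (fun i _ => Nat.factorial_pos _)
      exact (Nat.div_eq_of_eq_mul_left hprodpos hkey.symm).symm
    · rw [if_neg hnm]
      rw [Fintype.card_eq_zero_iff]
      constructor
      rintro ⟨f, hf⟩
      apply hnm
      have hdvd : ∀ i, n ∣ v i * m := fun i => ⟨_, (hf i).symm⟩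
      have h6 : n ∣ univ.gcd (fun i => v i * m) :=
        Finset.dvd_gcd (fun i _ => hdvd i)
      rw [Finset.gcd_mul_right, hgcd, one_mul] at h6
      simpa using h6
  -- sum over divisors
  have hsum : (∑ g : ZMod L, Fintype.card (AddAction.fixedBy S g))
      = ∑ d ∈ m.divisors,
          Nat.totient d * (Nat.factorial (L / d) / ∏ i, Nat.factorial (v i * m / d)) := by
    set F : ℕ → ℕ := fun n =>
      if n ∣ m then Nat.factorial (L / n) / ∏ i, Nat.factorial (v i * m / n) else 0 with hF
    have hmaps : ∀ g : ZMod L, g ∈ (univ : Finset (ZMod L)) → addOrderOf g ∈ L.divisors := by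
      intro g _
      refine Nat.mem_divisors.mpr ⟨?_, hL0.ne'⟩
      have h := addOrderOf_dvd_card (x := g)
      rwa [ZMod.card] at h
    calc ∑ g : ZMod L, Fintype.card (AddAction.fixedBy S g)
        = ∑ g : ZMod L, F (addOrderOf g) := Finset.sum_congr rfl (fun g _ => hFix g)
      _ = ∑ n ∈ L.divisors, ∑ g ∈ univ.filter (fun g : ZMod L => addOrderOf g = n),
            F (addOrderOf g) := (Finset.sum_fiberwise_of_maps_to hmaps _).symm
      _ = ∑ n ∈ L.divisors, Nat.totient n * F n := by
          refine Finset.sum_congr rfl (fun n hn => ?_)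
          have hcg : ∀ g ∈ univ.filter (fun g : ZMod L => addOrderOf g = n),
              F (addOrderOf g) = F n :=
            fun g hg => by rw [(Finset.mem_filter.mp hg).2]
          rw [Finset.sum_congr rfl hcg, Finset.sum_const, smul_eq_mul]
          congr 1
          have hdvd : n ∣ Fintype.card (ZMod L) := by
            rw [ZMod.card L]; exact (Nat.mem_divisors.mp hn).1
          exact IsAddCyclic.card_addOrderOf_eq_totient hdvd
      _ = ∑ d ∈ m.divisors, Nat.totient d * F d := by
          refine (Finset.sum_subset (Nat.divisors_subset_of_dvd hL0.ne'
            (Dvd.intro_left _ rfl)) ?_).symm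
          intro x hx hxm
          have hxnm : ¬ x ∣ m := fun hc =>
            hxm (Nat.mem_divisors.mpr ⟨hc, Nat.one_le_iff_ne_zero.mp hm⟩)
          rw [hF]
          simp only [hxnm, if_neg, if_false, mul_zero]
      _ = ∑ d ∈ m.divisors,
            Nat.totient d * (Nat.factorial (L / d) / ∏ i, Nat.factorial (v i * m / d)) := by
          refine Finset.sum_congr rfl (fun d hd => ?_)
          rw [hF]
          simp only [(Nat.mem_divisors.mp hd).1, if_true]
  rw [← hsum, burnside, hquot]
  conv_lhs => rw [Nat.mul_comm]
end
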